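/- Let (Ω, ℱ, ℙ) be a probability space, let (V_t)_{t≥1} be a sequence of i.i.d. integrable real random variables with V_t ≥ 0 almost surely, let δ ∈ (0,1), and let (δ_n)_{n≥1} be a non-increasing sequence of [0,1]-valued random variables such that limsup_{n→∞} δ_n ≤ δ almost surely. Define the quantile q_V(β) = inf{u ∈ ℝ : ℙ(V₁ ≤ u) ≥ β} for β ∈ [0,1]. Then, almost surely, limsup_{n→∞} sup{ (1/n) ∑_{t∈S} V_t : S ⊆ {1,…,n}, |S| ≤ δ_n · n } ≤ E[V₁ · 1_{V₁ ≥ q_V(1−δ)}]. -/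

import Mathlib

open MeasureTheory ProbabilityTheory Filter

/-- The `β`-quantile of a real random variable `V`:
`q_V(β) = inf {u ∈ ℝ : ℙ(V ≤ u) ≥ β}`. -/
noncomputable def rvQuantile {Ω : Type*} [MeasurableSpace Ω] (μ : Measure Ω)
    (V : Ω → ℝ) (β : ℝ) : ℝ :=
  sInf {u : ℝ | ENNReal.ofReal β ≤ μ {ω | V ω ≤ u}}

/-- Let `(V_t)` be i.i.d. integrable non-negative real random variables,
`δ ∈ (0,1)`, and `(δ_n)` a non-increasing sequence of `[0,1]`-valued random variables with
`limsup δ_n ≤ δ` a.s. Then, almost surely,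
`limsup_n sup{ (1/n) ∑_{t∈S} V_t : S ⊆ {1,…,n}, |S| ≤ δ_n n } ≤ E[V₁ 1_{V₁ ≥ q_V(1−δ)}]`. -/
theorem stmt7 {Ω : Type*} [MeasurableSpace Ω] (μ : Measure Ω) [IsProbabilityMeasure μ]
    (V : ℕ → Ω → ℝ) (hmeas : ∀ t, Measurable (V t))
    (hindep : iIndepFun V μ)
    (hident : ∀ t, IdentDistrib (V t) (V 1) μ μ)
    (hint : Integrable (V 1) μ)
    (hnonneg : ∀ t, ∀ᵐ ω ∂μ, 0 ≤ V t ω)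
    (δ : ℝ) (hδ : δ ∈ Set.Ioo (0:ℝ) 1)
    (δseq : ℕ → Ω → ℝ) (hδmeas : ∀ n, Measurable (δseq n))
    (hδ01 : ∀ n ω, δseq n ω ∈ Set.Icc (0:ℝ) 1)
    (hδanti : ∀ ω, Antitone fun n => δseq n ω)
    (hlimsup : ∀ᵐ ω ∂μ, limsup (fun n => δseq n ω) atTop ≤ δ) :
    ∀ᵐ ω ∂μ,
      limsup (fun n : ℕ => sSup {v : ℝ | ∃ S : Finset ℕ, S ⊆ Finset.Icc 1 n ∧
          (S.card : ℝ) ≤ δseq n ω * n ∧ v = (1 / (n : ℝ)) * ∑ t ∈ S, V t ω}) atTop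
        ≤ ∫ ω', Set.indicator {ω'' | rvQuantile μ (V 1) (1 - δ) ≤ V 1 ω''} (V 1) ω' ∂μ := by
  obtain ⟨hδ0, hδ1⟩ := hδ
  set q : ℝ := rvQuantile μ (V 1) (1 - δ) with hqdef
  set A : Set ℝ := {u : ℝ | ENNReal.ofReal (1 - δ) ≤ μ {ω | V 1 ω ≤ u}} with hAdef
  -- every element of A is nonnegative
  have hAnonneg : ∀ u ∈ A, 0 ≤ u := by
    intro u hu
    by_contra hneg
    push_neg at hneg
    have hnull : μ {ω | V 1 ω < 0} = 0 := by
      have := hnonneg 1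
      rw [ae_iff] at this
      simpa [not_le] using this
    have hsub : {ω | V 1 ω ≤ u} ⊆ {ω | V 1 ω < 0} := fun ω hω => lt_of_le_of_lt hω hneg
    have : μ {ω | V 1 ω ≤ u} = 0 := measure_mono_null hsub hnull
    rw [hAdef] at hu
    simp only [Set.mem_setOf_eq, this, nonpos_iff_eq_zero, ENNReal.ofReal_eq_zero] at hu
    linarith
  have hq0 : 0 ≤ q := Real.sInf_nonneg hAnonneg
  have hAbdd : BddBelow A := ⟨0, hAnonneg⟩
  -- for u < q, the CDF at u is below 1 - δ
  have hlt : ∀ u : ℝ, u < q → μ {ω | V 1 ω ≤ u} < ENNReal.ofReal (1 - δ) := by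
    intro u hu
    by_contra h
    push_neg at h
    exact absurd (csInf_le hAbdd h) (not_le.2 hu)
  -- μ {V₁ < q} ≤ 1 - δ
  have hltq : μ {ω | V 1 ω < q} ≤ ENNReal.ofReal (1 - δ) := by
    have hset : {ω | V 1 ω < q} = ⋃ k : ℕ, {ω | V 1 ω ≤ q - 1 / (k + 1)} := by
      ext ω
      simp only [Set.mem_setOf_eq, Set.mem_iUnion]
      constructor
      · intro h
        obtain ⟨k, hk⟩ := exists_nat_one_div_lt (sub_pos.2 h)
        exact ⟨k, by push_cast at hk ⊢; linarith⟩
      · rintro ⟨k, hk⟩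
        have : (0:ℝ) < 1 / ((k:ℝ) + 1) := by positivity
        linarith
    have hmono : Monotone fun k : ℕ => {ω | V 1 ω ≤ q - 1 / ((k:ℝ) + 1)} := by
      intro k l hkl ω hω
      simp only [Set.mem_setOf_eq] at hω ⊢
      have h1 : 1 / ((l:ℝ) + 1) ≤ 1 / ((k:ℝ) + 1) := by
        apply one_div_le_one_div_of_le (by positivity)
        exact_mod_cast by omega
      linarith
    rw [hset, hmono.directed_le.measure_iUnion]
    refine iSup_le fun k => le_of_lt (hlt _ ?_)
    have : (0:ℝ) < 1 / ((k:ℝ) + 1) := by positivity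
    linarith
  -- μ {q ≤ V₁} ≥ δ
  have hquant : ENNReal.ofReal δ ≤ μ {ω | q ≤ V 1 ω} := by
    have hcompl : {ω | q ≤ V 1 ω} = {ω | V 1 ω < q}ᶜ := by
      ext ω; simp [not_lt]
    rw [hcompl, measure_compl (measurableSet_lt (hmeas 1) measurable_const) (measure_ne_top μ _)]
    rw [measure_univ]
    calc ENNReal.ofReal δ = 1 - ENNReal.ofReal (1 - δ) := by
          rw [show (1:ENNReal) = ENNReal.ofReal 1 from (ENNReal.ofReal_one).symm,
            ← ENNReal.ofReal_sub 1 (by linarith)]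
          norm_num
      _ ≤ 1 - μ {ω | V 1 ω < q} := tsub_le_tsub_left hltq 1
  have hmeasS : MeasurableSet {ω | q ≤ V 1 ω} := measurableSet_le measurable_const (hmeas 1)
  have hμS : δ ≤ (μ {ω | q ≤ V 1 ω}).toReal := by
    have := ENNReal.toReal_mono (measure_ne_top μ _) hquant
    rwa [ENNReal.toReal_ofReal hδ0.le] at this
  -- the truncated function
  set f : ℝ → ℝ := fun x => max (x - q) 0 with hfdef
  have hfmeas : Measurable f := (measurable_id.sub measurable_const).max measurable_const
  have hfnonneg : ∀ x, 0 ≤ f x := fun x => le_max_right _ _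
  have hfbound : ∀ x, x ≤ f x + q := by
    intro x
    rcases le_or_gt x q with h | h
    · have : 0 ≤ f x := hfnonneg x
      linarith
    · simp only [hfdef]
      rw [max_eq_left (by linarith)]
      linarith
  -- SLLN for the shifted truncated sequence
  set X : ℕ → Ω → ℝ := fun i ω => f (V (1 + i) ω) with hXdef
  have hXint : Integrable (X 0) μ := by
    have : Integrable (fun ω => f (V 1 ω)) μ := by
      apply Integrable.mono' (hint.abs.add (integrable_const |q|))
        (hfmeas.comp (hmeas 1)).aestronglyMeasurable
      filter_upwards with ω
      simp only [Function.comp_apply, Pi.add_apply, Real.norm_eq_abs]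
      rw [abs_of_nonneg (hfnonneg _)]
      refine max_le ?_ (by positivity)
      have := le_abs_self (V 1 ω)
      have := neg_abs_le q
      linarith
    simpa [hXdef] using this
  have hXindep : Pairwise (Function.onFun (IndepFun · · μ) X) := by
    intro i j hij
    have h1 : IndepFun (V (1 + i)) (V (1 + j)) μ := hindep.indepFun (by omega)
    exact h1.comp hfmeas hfmeas
  have hXident : ∀ i, IdentDistrib (X i) (X 0) μ μ := by
    intro i
    have h1 : IdentDistrib (V (1 + i)) (V (1 + 0)) μ μ :=
      (hident (1 + i)).trans (hident (1 + 0)).symm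
    exact h1.comp hfmeas
  have hSLLN := strong_law_ae_real X hXint hXindep hXident
  have hL : μ[X 0] = ∫ ω, f (V 1 ω) ∂μ := by simp [hXdef]
  -- Step B : ∫ f ∘ V₁ + δ q ≤ ∫ indicator
  have hindint : Integrable (Set.indicator {ω | q ≤ V 1 ω} (V 1)) μ := hint.indicator hmeasS
  have hconstint : Integrable (Set.indicator {ω | q ≤ V 1 ω} fun _ => q) μ :=
    (integrable_const q).indicator hmeasS
  have hB : (∫ ω, f (V 1 ω) ∂μ) + δ * q ≤
      ∫ ω', Set.indicator {ω'' | q ≤ V 1 ω''} (V 1) ω' ∂μ := by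
    have hptwise : ∀ ω, f (V 1 ω) =
        Set.indicator {ω' | q ≤ V 1 ω'} (V 1) ω -
          Set.indicator {ω' | q ≤ V 1 ω'} (fun _ => q) ω := by
      intro ω
      by_cases h : q ≤ V 1 ω
      · simp only [Set.indicator_apply, Set.mem_setOf_eq, if_pos h]
        exact max_eq_left (by linarith)
      · simp only [Set.indicator_apply, Set.mem_setOf_eq, if_neg h, sub_zero]
        push_neg at h
        show max (V 1 ω - q) 0 = 0
        rw [max_eq_right (by linarith : V 1 ω - q ≤ (0:ℝ))]
    have hInt : (∫ ω, f (V 1 ω) ∂μ) =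
        (∫ ω', Set.indicator {ω'' | q ≤ V 1 ω''} (V 1) ω' ∂μ) -
          q * (μ {ω | q ≤ V 1 ω}).toReal := by
      calc (∫ ω, f (V 1 ω) ∂μ)
          = ∫ ω, (Set.indicator {ω' | q ≤ V 1 ω'} (V 1) ω -
              Set.indicator {ω' | q ≤ V 1 ω'} (fun _ => q) ω) ∂μ := by
            congr 1; ext ω; exact hptwise ω
        _ = (∫ ω', Set.indicator {ω'' | q ≤ V 1 ω''} (V 1) ω' ∂μ) -
              ∫ ω, Set.indicator {ω' | q ≤ V 1 ω'} (fun _ => q) ω ∂μ :=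
            integral_sub hindint hconstint
        _ = (∫ ω', Set.indicator {ω'' | q ≤ V 1 ω''} (V 1) ω' ∂μ) -
              q * (μ {ω | q ≤ V 1 ω}).toReal := by
            rw [integral_indicator_const q hmeasS, smul_eq_mul, Measure.real]
            ring
    rw [hInt]
    have : δ * q ≤ (μ {ω | q ≤ V 1 ω}).toReal * q :=
      mul_le_mul_of_nonneg_right hμS hq0
    linarith
  -- Combine
  filter_upwards [hSLLN, hlimsup] with ω hSω hLω
  set u : ℕ → ℝ := fun n => sSup {v : ℝ | ∃ S : Finset ℕ, S ⊆ Finset.Icc 1 n ∧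
      (S.card : ℝ) ≤ δseq n ω * n ∧ v = (1 / (n : ℝ)) * ∑ t ∈ S, V t ω} with hudef
  -- the sets are finite, contain 0
  have hfin : ∀ n : ℕ, BddAbove {v : ℝ | ∃ S : Finset ℕ, S ⊆ Finset.Icc 1 n ∧
      (S.card : ℝ) ≤ δseq n ω * n ∧ v = (1 / (n : ℝ)) * ∑ t ∈ S, V t ω} := by
    intro n
    apply Set.Finite.bddAbove
    apply Set.Finite.subset (((Finset.Icc 1 n).powerset.image
      (fun S : Finset ℕ => (1 / (n : ℝ)) * ∑ t ∈ S, V t ω)).finite_toSet)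
    rintro v ⟨S, hsub, -, rfl⟩
    exact Finset.mem_coe.2 (Finset.mem_image.2 ⟨S, Finset.mem_powerset.2 hsub, rfl⟩)
  have h0mem : ∀ n : ℕ, (0:ℝ) ∈ {v : ℝ | ∃ S : Finset ℕ, S ⊆ Finset.Icc 1 n ∧
      (S.card : ℝ) ≤ δseq n ω * n ∧ v = (1 / (n : ℝ)) * ∑ t ∈ S, V t ω} := by
    intro n
    refine ⟨∅, Finset.empty_subset _, ?_, by simp⟩
    simp only [Finset.card_empty, Nat.cast_zero]
    exact mul_nonneg (hδ01 n ω).1 (Nat.cast_nonneg n)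
  have hu0 : ∀ n, 0 ≤ u n := fun n => le_csSup (hfin n) (h0mem n)
  -- key per-n bound
  have hkey : ∀ n : ℕ, 1 ≤ n →
      u n ≤ (1 / (n : ℝ)) * (∑ i ∈ Finset.range n, X i ω) + δseq n ω * q := by
    intro n hn
    have hnpos : (0:ℝ) < n := by exact_mod_cast hn
    have hXsum : (∑ i ∈ Finset.range n, X i ω) = ∑ t ∈ Finset.Icc 1 n, f (V t ω) := by
      rw [← Finset.Ico_add_one_right_eq_Icc, Finset.sum_Ico_eq_sum_range]
      simp [hXdef]
    have hsumnn : 0 ≤ ∑ i ∈ Finset.range n, X i ω :=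
      Finset.sum_nonneg fun i _ => hfnonneg _
    apply Real.sSup_le
    · rintro v ⟨S, hSsub, hScard, rfl⟩
      have h1 : ∑ t ∈ S, V t ω ≤ ∑ t ∈ S, (f (V t ω) + q) :=
        Finset.sum_le_sum fun t _ => hfbound (V t ω)
      have h2 : ∑ t ∈ S, (f (V t ω) + q) = (∑ t ∈ S, f (V t ω)) + S.card * q := by
        rw [Finset.sum_add_distrib, Finset.sum_const, nsmul_eq_mul]
      have h3 : (∑ t ∈ S, f (V t ω)) ≤ ∑ t ∈ Finset.Icc 1 n, f (V t ω) :=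
        Finset.sum_le_sum_of_subset_of_nonneg hSsub fun t _ _ => hfnonneg _
      have h4 : (S.card : ℝ) * q ≤ δseq n ω * n * q :=
        mul_le_mul_of_nonneg_right hScard hq0
      have h5 : ∑ t ∈ S, V t ω ≤ (∑ i ∈ Finset.range n, X i ω) + δseq n ω * n * q := by
        rw [hXsum]; linarith
      calc (1 / (n : ℝ)) * ∑ t ∈ S, V t ω
          ≤ (1 / (n : ℝ)) * ((∑ i ∈ Finset.range n, X i ω) + δseq n ω * n * q) := by
            apply mul_le_mul_of_nonneg_left h5 (by positivity)
        _ = (1 / (n : ℝ)) * (∑ i ∈ Finset.range n, X i ω) + δseq n ω * q := by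
            field_simp
    · have := (hδ01 n ω).1
      positivity
  -- limsup bound
  refine le_trans ?_ hB
  have hcobdd : IsCoboundedUnder (· ≤ ·) atTop u :=
    IsBoundedUnder.isCoboundedUnder_le
      ⟨0, Filter.eventually_map.2 (Filter.Eventually.of_forall hu0)⟩
  apply le_of_forall_pos_le_add
  intro ε hε
  set ε' : ℝ := ε / (2 * (q + 1)) with hε'def
  have hε'pos : 0 < ε' := by positivity
  have hδbd : IsBoundedUnder (· ≤ ·) atTop (fun n => δseq n ω) :=
    ⟨1, Filter.eventually_map.2 (Filter.Eventually.of_forall fun n => (hδ01 n ω).2)⟩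
  have e1 : ∀ᶠ n : ℕ in atTop, 1 ≤ n := Filter.eventually_ge_atTop 1
  have e2 : ∀ᶠ n : ℕ in atTop,
      (fun n : ℕ => (∑ i ∈ Finset.range n, X i ω) / n) n ≤ μ[X 0] + ε / 2 := by
    apply Tendsto.eventually_le_const _ hSω
    linarith
  have e3 : ∀ᶠ n : ℕ in atTop, δseq n ω < δ + ε' :=
    eventually_lt_of_limsup_lt (lt_of_le_of_lt hLω (by linarith)) hδbd
  apply limsup_le_of_le hcobdd
  filter_upwards [e1, e2, e3] with n hn h2 h3
  have hkn := hkey n hn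
  have heqdiv : (1 / (n : ℝ)) * (∑ i ∈ Finset.range n, X i ω) =
      (∑ i ∈ Finset.range n, X i ω) / n := by ring
  have hδq : δseq n ω * q ≤ (δ + ε') * q :=
    mul_le_mul_of_nonneg_right h3.le hq0
  have hε'q : ε' * q ≤ ε / 2 := by
    rw [hε'def]
    rw [div_mul_eq_mul_div, div_le_iff₀ (by positivity)]
    nlinarith
  calc u n ≤ (1 / (n : ℝ)) * (∑ i ∈ Finset.range n, X i ω) + δseq n ω * q := hkn
    _ ≤ (μ[X 0] + ε / 2) + (δ + ε') * q := by
        rw [heqdiv]; exact add_le_add h2 hδq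
    _ ≤ (∫ ω', f (V 1 ω') ∂μ) + δ * q + ε := by
        rw [hL]; nlinarith
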